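/- arXiv:1110.4060 — 2 statements merged into one kernel-verified Lean document; each statement's English description precedes it below -/
import Mathlib

section
/- Let A be a K-tuple of polytopes. A subtuple AJ (J ⊆ K) is called essential if dim(AI) > dim(AJ) for every proper subset I ⊊ J, and dim(AJ) = min_{I⊆K} dim(AI). Then there exists a unique maximal J ⊆ K such that AJ is essential, and this J coincides with the unique minimal subset I₀ with dim(AI₀) = min dim A. -/
open Pointwise MeasureTheory Metric

noncomputable section

/-- Ambient Euclidean space `ℝⁿ`. -/
abbrev V (n : ℕ) : Type := EuclideanSpace ℝ (Fin n)

/-- Dimension of (the affine span of) a subset of `ℝⁿ`. -/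
def affDim {n : ℕ} (s : Set (V n)) : ℕ := Module.finrank ℝ (vectorSpan ℝ s)

/-- A (compact convex) polytope: the convex hull of a nonempty finite set. -/
def IsPolytope {n : ℕ} (P : Set (V n)) : Prop :=
  ∃ F : Finset (V n), F.Nonempty ∧ P = convexHull ℝ (F : Set (V n))

/-- `dim AJ = dim (∑_{j ∈ J} A j) − |J|` for a tuple of polytopes; the empty
Minkowski sum is `{0}` (the `0` of the pointwise monoid on sets). -/
def tdim {n : ℕ} {K : Type} [Fintype K] (A : K → Set (V n)) (J : Finset K) : ℤ :=
  (affDim (∑ j ∈ J, A j) : ℤ) - J.card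


/-- A subtuple `AJ` is essential if `dim AJ` is the minimum of `dim` over all
subtuples, and every proper subtuple has strictly bigger `dim`. -/
def Essential {n : ℕ} {K : Type} [Fintype K] (A : K → Set (V n)) (J : Finset K) : Prop :=
  IsLeast (Set.range (tdim A)) (tdim A J) ∧ ∀ I : Finset K, I ⊂ J → tdim A J < tdim A I

lemma vspan_add {n : ℕ} {s t : Set (V n)} (hs : s.Nonempty) (ht : t.Nonempty) :
    vectorSpan ℝ (s + t) = vectorSpan ℝ s ⊔ vectorSpan ℝ t := by
  apply le_antisymm
  · rw [vectorSpan_def, Submodule.span_le]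
    rintro v ⟨x, ⟨a, ha, b, hb, rfl⟩, y, ⟨a', ha', b', hb', rfl⟩, rfl⟩
    have : (a + b) -ᵥ (a' + b') = (a -ᵥ a') + (b -ᵥ b') := by
      simp [vsub_eq_sub]; abel
    beta_reduce
    rw [this]
    exact Submodule.add_mem _
      (Submodule.mem_sup_left (vsub_mem_vectorSpan ℝ ha ha'))
      (Submodule.mem_sup_right (vsub_mem_vectorSpan ℝ hb hb'))
  · obtain ⟨a0, ha0⟩ := hs
    obtain ⟨b0, hb0⟩ := ht
    refine sup_le ?_ ?_
    · rw [vectorSpan_def, Submodule.span_le]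
      rintro v ⟨x, hx, y, hy, rfl⟩
      have : x -ᵥ y = (x + b0) -ᵥ (y + b0) := by simp [vsub_eq_sub]
      beta_reduce
      rw [this]
      exact vsub_mem_vectorSpan ℝ (Set.add_mem_add hx hb0) (Set.add_mem_add hy hb0)
    · rw [vectorSpan_def, Submodule.span_le]
      rintro v ⟨x, hx, y, hy, rfl⟩
      have : x -ᵥ y = (a0 + x) -ᵥ (a0 + y) := by simp [vsub_eq_sub]
      beta_reduce
      rw [this]
      exact vsub_mem_vectorSpan ℝ (Set.add_mem_add ha0 hx) (Set.add_mem_add ha0 hy)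

lemma sum_ne {n : ℕ} {K : Type} [Fintype K] {A : K → Set (V n)}
    (hA : ∀ k, (A k).Nonempty) (J : Finset K) : (∑ j ∈ J, A j).Nonempty := by
  classical
  induction J using Finset.induction with
  | empty => exact ⟨0, Set.zero_mem_zero⟩
  | insert _ _ h ih => rw [Finset.sum_insert h]; exact (hA _).add ih

lemma vspan_sum {n : ℕ} {K : Type} [Fintype K] {A : K → Set (V n)}
    (hA : ∀ k, (A k).Nonempty) (J : Finset K) :
    vectorSpan ℝ (∑ j ∈ J, A j) = J.sup (fun j => vectorSpan ℝ (A j)) := by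
  classical
  induction J using Finset.induction with
  | empty =>
    rw [Finset.sum_empty, Finset.sup_empty, show (0 : Set (V n)) = {0} from rfl,
      vectorSpan_singleton]
  | insert _ _ h ih =>
    rw [Finset.sum_insert h, vspan_add (hA _) (sum_ne hA _), Finset.sup_insert, ih]

lemma tdim_submod {n : ℕ} {K : Type} [Fintype K] [DecidableEq K]
    {A : K → Set (V n)} (hA : ∀ k, (A k).Nonempty) (I J : Finset K) :
    tdim A (I ∪ J) + tdim A (I ∩ J) ≤ tdim A I + tdim A J := by
  unfold tdim affDim
  rw [vspan_sum hA, vspan_sum hA, vspan_sum hA, vspan_sum hA]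
  set f : K → Submodule ℝ (V n) := fun j => vectorSpan ℝ (A j) with hf
  rw [Finset.sup_union]
  have h2 : (I ∩ J).sup f ≤ I.sup f ⊓ J.sup f :=
    le_inf (Finset.sup_mono Finset.inter_subset_left)
      (Finset.sup_mono Finset.inter_subset_right)
  have h3 : Module.finrank ℝ ↥(I.sup f ⊔ J.sup f) + Module.finrank ℝ ↥(I.sup f ⊓ J.sup f)
      = Module.finrank ℝ ↥(I.sup f) + Module.finrank ℝ ↥(J.sup f) :=
    Submodule.finrank_sup_add_finrank_inf_eq _ _
  have h4 : Module.finrank ℝ ↥((I ∩ J).sup f) ≤ Module.finrank ℝ ↥(I.sup f ⊓ J.sup f) :=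
    Submodule.finrank_mono h2
  have h5 : (I ∪ J).card + (I ∩ J).card = I.card + J.card :=
    Finset.card_union_add_card_inter I J
  omega

/-- There is a unique maximal essential subtuple, and it coincides with the unique
minimal subset realizing `min dim A`. -/
theorem stmt2 {n : ℕ} {K : Type} [Fintype K] [DecidableEq K]
    (A : K → Set (V n)) (hA : ∀ k, IsPolytope (A k))
    (m : ℤ) (hm : IsLeast (Set.range (tdim A)) m) :
    ∃! J : Finset K, (Essential A J ∧ ∀ J' : Finset K, Essential A J' → J' ⊆ J) ∧
      (tdim A J = m ∧
        ∀ I₀ : Finset K, (tdim A I₀ = m ∧ ∀ I : Finset K, tdim A I = m → I₀ ⊆ I) → J = I₀) := by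
  classical
  have hAne : ∀ k, (A k).Nonempty := by
    intro k
    obtain ⟨F, hF, hFP⟩ := hA k
    rw [hFP]
    exact (Finset.coe_nonempty.mpr hF).convexHull
  -- minimizers are closed under intersection
  have hminint : ∀ I J : Finset K, tdim A I = m → tdim A J = m → tdim A (I ∩ J) = m := by
    intro I J hI hJ
    have h1 := tdim_submod hAne I J
    have h2 : m ≤ tdim A (I ∩ J) := hm.2 ⟨_, rfl⟩
    have h3 : m ≤ tdim A (I ∪ J) := hm.2 ⟨_, rfl⟩
    omega
  obtain ⟨J0, hJ0⟩ := hm.1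
  -- pick a minimizer of minimal cardinality
  obtain ⟨I₀, hI₀mem, hI₀min⟩ := Finset.exists_min_image
    (Finset.univ.filter (fun J : Finset K => tdim A J = m)) Finset.card
    ⟨J0, by simp [hJ0]⟩
  simp only [Finset.mem_filter, Finset.mem_univ, true_and] at hI₀mem hI₀min
  -- I₀ is contained in every minimizer
  have hsub : ∀ I : Finset K, tdim A I = m → I₀ ⊆ I := by
    intro I hI
    have h1 : tdim A (I₀ ∩ I) = m := hminint _ _ hI₀mem hI
    have h2 := hI₀min _ h1
    have h3 : I₀ ∩ I = I₀ :=
      Finset.eq_of_subset_of_card_le Finset.inter_subset_left h2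
    rw [← h3]
    exact Finset.inter_subset_right
  have hEss : Essential A I₀ := by
    constructor
    · rw [hI₀mem]; exact hm
    · intro I hI
      have h2 : m ≤ tdim A I := hm.2 ⟨_, rfl⟩
      rcases lt_or_eq_of_le h2 with h | h
      · rw [hI₀mem]; exact h
      · exact absurd (Finset.Subset.antisymm hI.subset (hsub I h.symm)) hI.ne
  have hEssSub : ∀ J' : Finset K, Essential A J' → J' ⊆ I₀ := by
    intro J' hJ'
    have hJ'm : tdim A J' = m := hJ'.1.unique hm
    have h1 : tdim A (I₀ ∩ J') = m := hminint _ _ hI₀mem hJ'm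
    by_contra hns
    have hss : I₀ ∩ J' ⊂ J' :=
      ⟨Finset.inter_subset_right, fun h => hns fun x hx => (Finset.mem_inter.mp (h hx)).1⟩
    have := hJ'.2 _ hss
    rw [hJ'm, h1] at this
    exact lt_irrefl _ this
  refine ⟨I₀, ⟨⟨hEss, hEssSub⟩, hI₀mem, ?_⟩, ?_⟩
  · rintro I₀' ⟨h1, h2⟩
    exact Finset.Subset.antisymm (hsub _ h1) (h2 _ hI₀mem)
  · rintro J ⟨⟨hJE, _⟩, -⟩
    exact Finset.Subset.antisymm (hEssSub _ hJE)
      (hsub _ (hJE.1.unique hm))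
end
end

section
/- If E is a trivial essential facing of a tuple A of polytopes (i.e., E is an essential subtuple of A itself realizing min dim A), then dim E = min dim A; if E is a nontrivial essential facing (the maximal essential subtuple of a proper face B of A, not a subtuple of A), then dim E < min dim A. -/
open Pointwise MeasureTheory Metric

noncomputable section

open scoped RealInnerProductSpace

/-- The support face `Δ^γ` of `Δ` for a covector `γ` (identified with a vector via the
Euclidean structure): the face where `⟪γ, ·⟫` attains its maximum. -/
def suppFaceV {n : ℕ} (g : V n) (Δ : Set (V n)) : Set (V n) :=
  {x ∈ Δ | ∀ y ∈ Δ, ⟪g, y⟫ ≤ ⟪g, x⟫}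

/-- `F` is a face of the polytope `Δ` (the support face of some covector; `γ = 0`
gives `Δ` itself). -/
def IsFaceOfP {n : ℕ} (F Δ : Set (V n)) : Prop :=
  ∃ g : V n, F = suppFaceV g Δ

/-- A tuple `B` is a face of the tuple `A`: each `B i` is a face of `A i` and `∑ B`
is a face of `∑ A`. -/
def TupleFace {n : ℕ} {K : Type} [Fintype K] (B A : K → Set (V n)) : Prop :=
  (∀ i, IsFaceOfP (B i) (A i)) ∧ IsFaceOfP (∑ i, B i) (∑ i, A i)

/-- `AI` is the maximal essential subtuple of `A`. -/
def MaxEssentialSub {n : ℕ} {K : Type} [Fintype K] (A : K → Set (V n)) (I : Finset K) :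
    Prop :=
  Essential A I ∧ ∀ J : Finset K, Essential A J → J ⊆ I

/-! ### Auxiliary lemmas -/

section Aux

variable {n : ℕ} {K : Type} [Fintype K]

/-- Support face with respect to a continuous linear functional. -/
def suppF {n : ℕ} (f : V n →L[ℝ] ℝ) (Δ : Set (V n)) : Set (V n) :=
  {x ∈ Δ | ∀ y ∈ Δ, f y ≤ f x}

lemma suppFaceV_eq_suppF (g : V n) (Δ : Set (V n)) :
    suppFaceV g Δ = suppF (innerSL ℝ g) Δ := rfl

lemma suppF_subset (f : V n →L[ℝ] ℝ) (Δ : Set (V n)) : suppF f Δ ⊆ Δ :=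
  fun _ hx => hx.1

lemma suppF_nonempty {Δ : Set (V n)} (hc : IsCompact Δ) (hne : Δ.Nonempty)
    (f : V n →L[ℝ] ℝ) : (suppF f Δ).Nonempty := by
  obtain ⟨x, hx, hmax⟩ := hc.exists_isMaxOn hne f.continuous.continuousOn
  exact ⟨x, hx, fun y hy => hmax hy⟩

lemma suppF_isClosed {Δ : Set (V n)} (hc : IsClosed Δ) (f : V n →L[ℝ] ℝ) :
    IsClosed (suppF f Δ) := by
  have h : suppF f Δ = Δ ∩ ⋂ y ∈ Δ, {x | f y ≤ f x} := by
    ext x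
    simp [suppF, Set.mem_iInter]
  rw [h]
  exact hc.inter (isClosed_biInter fun y _ => isClosed_le continuous_const f.continuous)

lemma suppF_convex {Δ : Set (V n)} (hΔ : Convex ℝ Δ) (f : V n →L[ℝ] ℝ) :
    Convex ℝ (suppF f Δ) := by
  intro x hx y hy a b ha hb hab
  refine ⟨hΔ hx.1 hy.1 ha hb hab, fun z hz => ?_⟩
  have h1 : f z ≤ f x := hx.2 z hz
  have h2 : f z ≤ f y := hy.2 z hz
  have h3 : f (a • x + b • y) = a * f x + b * f y := by
    rw [map_add, f.map_smul, f.map_smul, smul_eq_mul, smul_eq_mul]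
  have h4 : f z = a * f z + b * f z := by rw [← add_mul, hab, one_mul]
  rw [h3]
  linarith [mul_le_mul_of_nonneg_left h1 ha, mul_le_mul_of_nonneg_left h2 hb]

lemma suppF_compact {Δ : Set (V n)} (hc : IsCompact Δ) (f : V n →L[ℝ] ℝ) :
    IsCompact (suppF f Δ) :=
  hc.of_isClosed_subset (suppF_isClosed hc.isClosed f) (suppF_subset f Δ)

/-- Components of a decomposition of a point of a support face of a Minkowski sum lie
in the corresponding support faces. -/
lemma mem_suppF_of_sum_mem [DecidableEq K] {J : Finset K} {S : K → Set (V n)}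
    (f : V n →L[ℝ] ℝ) {x : K → V n} (hx : ∀ j ∈ J, x j ∈ S j)
    (hmem : (∑ j ∈ J, x j) ∈ suppF f (∑ j ∈ J, S j)) :
    ∀ j ∈ J, x j ∈ suppF f (S j) := by
  intro j hj
  refine ⟨hx j hj, fun y hy => ?_⟩
  set z : K → V n := Function.update x j y with hz
  have hzmem : (∑ k ∈ J, z k) ∈ ∑ k ∈ J, S k := by
    refine Set.finset_sum_mem_finset_sum _ _ _ (fun k hk => ?_)
    rcases eq_or_ne k j with rfl | hkj
    · simpa [hz]
    · simpa [hz, Function.update_of_ne hkj] using hx k hk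
  have hle := hmem.2 _ hzmem
  rw [map_sum, map_sum, ← Finset.add_sum_erase J (fun k => f (z k)) hj,
    ← Finset.add_sum_erase J (fun k => f (x k)) hj] at hle
  have herase : ∑ k ∈ J.erase j, f (z k) = ∑ k ∈ J.erase j, f (x k) := by
    refine Finset.sum_congr rfl fun k hk => ?_
    rw [hz, Function.update_of_ne (Finset.ne_of_mem_erase hk)]
  rw [herase] at hle
  have hzj : z j = y := by rw [hz, Function.update_self]
  rw [hzj] at hle
  linarith

/-- The support face of a Minkowski sum is the Minkowski sum of the support faces. -/
lemma suppF_sum [DecidableEq K] (J : Finset K) (S : K → Set (V n)) (f : V n →L[ℝ] ℝ) :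
    suppF f (∑ j ∈ J, S j) = ∑ j ∈ J, suppF f (S j) := by
  apply subset_antisymm
  · intro x hxmem
    obtain ⟨xc, hxc, hsum⟩ := (Set.mem_finset_sum J S x).mp hxmem.1
    have h := mem_suppF_of_sum_mem f (fun j hj => hxc hj) (by rw [hsum]; exact hxmem)
    rw [← hsum]
    exact Set.finset_sum_mem_finset_sum _ _ _ h
  · intro x hxmem
    obtain ⟨xc, hxc, hsum⟩ := (Set.mem_finset_sum J _ x).mp hxmem
    have hxcS : ∀ j ∈ J, xc j ∈ S j := fun j hj => (hxc hj).1
    refine ⟨by rw [← hsum]; exact Set.finset_sum_mem_finset_sum _ _ _ hxcS, ?_⟩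
    intro y hy
    obtain ⟨yc, hyc, hysum⟩ := (Set.mem_finset_sum J S y).mp hy
    rw [← hsum, ← hysum, map_sum, map_sum]
    exact Finset.sum_le_sum fun j hj => (hxc hj).2 _ (hyc hj)

/-- Separation: if two componentwise-nested families of compact convex sets have the same
Minkowski sum, they are equal. -/
lemma eq_of_sum_eq_sum [DecidableEq K] {J : Finset K} {S T : K → Set (V n)}
    (hsub : ∀ j ∈ J, S j ⊆ T j) (hScv : ∀ j ∈ J, Convex ℝ (S j))
    (hScl : ∀ j ∈ J, IsClosed (S j)) (hTc : ∀ j ∈ J, IsCompact (T j))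
    (hTne : ∀ j ∈ J, (T j).Nonempty)
    (hsum : ∑ j ∈ J, S j = ∑ j ∈ J, T j) : ∀ j ∈ J, S j = T j := by
  intro i hi
  refine subset_antisymm (hsub i hi) ?_
  intro p hp
  by_contra hps
  obtain ⟨f, u, hfu, hup⟩ :=
    geometric_hahn_banach_closed_point (hScv i hi) (hScl i hi) hps
  have hmax : ∀ j ∈ J, ∃ z ∈ T j, ∀ w ∈ T j, f w ≤ f z := by
    intro j hj
    obtain ⟨z, hz, hzmax⟩ := (hTc j hj).exists_isMaxOn (hTne j hj) f.continuous.continuousOn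
    exact ⟨z, hz, fun w hw => hzmax hw⟩
  choose! y hy hymax using hmax
  have hymem : (∑ j ∈ J, y j) ∈ ∑ j ∈ J, S j := by
    rw [hsum]
    exact Set.finset_sum_mem_finset_sum _ _ _ hy
  obtain ⟨x, hx, hxsum⟩ := (Set.mem_finset_sum J S _).mp hymem
  have hlt : ∑ j ∈ J, f (x j) < ∑ j ∈ J, f (y j) := by
    refine Finset.sum_lt_sum (fun j hj => hymax j hj _ (hsub j hj (hx hj))) ⟨i, hi, ?_⟩
    calc f (x i) < u := hfu _ (hx hi)
    _ < f p := hup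
    _ ≤ f (y i) := hymax i hi p hp
  rw [← map_sum, ← map_sum, hxsum] at hlt
  exact lt_irrefl _ hlt

lemma sum_sets_nonempty {J : Finset K} {S : K → Set (V n)}
    (h : ∀ j ∈ J, (S j).Nonempty) : (∑ j ∈ J, S j).Nonempty := by
  classical
  choose! x hx using h
  exact ⟨∑ j ∈ J, x j, Set.finset_sum_mem_finset_sum _ _ _ hx⟩

lemma vectorSpan_add_eq {s t : Set (V n)} (hs : s.Nonempty) (ht : t.Nonempty) :
    vectorSpan ℝ (s + t) = vectorSpan ℝ s ⊔ vectorSpan ℝ t := by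
  apply le_antisymm
  · rw [vectorSpan_def, Submodule.span_le]
    rintro v hv
    obtain ⟨a, ha, b, hb, rfl⟩ := Set.mem_vsub.mp hv
    obtain ⟨a1, ha1, a2, ha2, rfl⟩ := ha
    obtain ⟨b1, hb1, b2, hb2, rfl⟩ := hb
    have h : (a1 + a2) -ᵥ (b1 + b2) = (a1 -ᵥ b1) + (a2 -ᵥ b2) := by
      simp only [vsub_eq_sub]; abel
    rw [h]
    exact Submodule.add_mem_sup (vsub_mem_vectorSpan ℝ ha1 hb1)
      (vsub_mem_vectorSpan ℝ ha2 hb2)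
  · obtain ⟨b0, hb0⟩ := ht
    obtain ⟨a0, ha0⟩ := hs
    refine sup_le ?_ ?_
    · rw [vectorSpan_def, Submodule.span_le]
      rintro v hv
      obtain ⟨a, ha, b, hb, rfl⟩ := Set.mem_vsub.mp hv
      have h : a -ᵥ b = (a + b0) -ᵥ (b + b0) := by simp only [vsub_eq_sub]; abel
      rw [h]
      exact vsub_mem_vectorSpan ℝ (Set.add_mem_add ha hb0) (Set.add_mem_add hb hb0)
    · rw [vectorSpan_def, Submodule.span_le]
      rintro v hv
      obtain ⟨a, ha, b, hb, rfl⟩ := Set.mem_vsub.mp hv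
      have h : a -ᵥ b = (a0 + a) -ᵥ (a0 + b) := by simp only [vsub_eq_sub]; abel
      rw [h]
      exact vsub_mem_vectorSpan ℝ (Set.add_mem_add ha0 ha) (Set.add_mem_add ha0 hb)

lemma vectorSpan_zero_set : vectorSpan ℝ (0 : Set (V n)) = ⊥ := by
  have h : (0 : Set (V n)) = {0} := rfl
  rw [h, vectorSpan_singleton]

lemma vectorSpan_sum (J : Finset K) (S : K → Set (V n))
    (h : ∀ j ∈ J, (S j).Nonempty) :
    vectorSpan ℝ (∑ j ∈ J, S j) = J.sup (fun j => vectorSpan ℝ (S j)) := by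
  classical
  induction J using Finset.cons_induction with
  | empty => simp [vectorSpan_zero_set]
  | cons a J ha ih =>
    rw [Finset.sum_cons, Finset.sup_cons,
      vectorSpan_add_eq (h a (Finset.mem_cons_self a J))
        (sum_sets_nonempty fun j hj => h j (Finset.mem_cons_of_mem hj)),
      ih fun j hj => h j (Finset.mem_cons_of_mem hj)]

lemma affDim_mono {s t : Set (V n)} (h : s ⊆ t) : affDim s ≤ affDim t :=
  Submodule.finrank_mono (vectorSpan_mono ℝ h)

lemma tdim_mono {A B : K → Set (V n)} (h : ∀ j, B j ⊆ A j) (J : Finset K) :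
    tdim B J ≤ tdim A J := by
  unfold tdim
  have h2 : affDim (∑ j ∈ J, B j) ≤ affDim (∑ j ∈ J, A j) :=
    affDim_mono (Set.finset_sum_subset_finset_sum J _ _ fun j _ => h j)
  omega

/-- Submodularity of `tdim` for tuples of nonempty sets. -/
lemma tdim_submodular [DecidableEq K] {S : K → Set (V n)} (h : ∀ j, (S j).Nonempty)
    (I J : Finset K) :
    tdim S (I ∪ J) + tdim S (I ∩ J) ≤ tdim S I + tdim S J := by
  set W : K → Submodule ℝ (V n) := fun j => vectorSpan ℝ (S j) with hW
  have hvs : ∀ L : Finset K, affDim (∑ j ∈ L, S j) = Module.finrank ℝ ↥(L.sup W) := by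
    intro L
    unfold affDim
    rw [vectorSpan_sum L S fun j _ => h j]
  have hcard : (I ∪ J).card + (I ∩ J).card = I.card + J.card :=
    Finset.card_union_add_card_inter I J
  have hsup : (I ∪ J).sup W = I.sup W ⊔ J.sup W := Finset.sup_union
  have hinf : (I ∩ J).sup W ≤ I.sup W ⊓ J.sup W :=
    le_inf (Finset.sup_mono Finset.inter_subset_left)
      (Finset.sup_mono Finset.inter_subset_right)
  have heq : Module.finrank ℝ ↥(I.sup W ⊔ J.sup W) +
      Module.finrank ℝ ↥(I.sup W ⊓ J.sup W) =
      Module.finrank ℝ ↥(I.sup W) + Module.finrank ℝ ↥(J.sup W) :=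
    Submodule.finrank_sup_add_finrank_inf_eq _ _
  have h1 : Module.finrank ℝ ↥((I ∩ J).sup W) ≤
      Module.finrank ℝ ↥(I.sup W ⊓ J.sup W) :=
    Submodule.finrank_mono hinf
  unfold tdim
  rw [hvs, hvs, hvs, hvs, hsup]
  push_cast
  omega

/-- A proper support face has strictly smaller affine dimension. -/
lemma affDim_suppF_lt {f : V n →L[ℝ] ℝ} {Δ : Set (V n)}
    (hne : (suppF f Δ).Nonempty) (hneq : suppF f Δ ≠ Δ) :
    affDim (suppF f Δ) < affDim Δ := by
  obtain ⟨x, hx⟩ := hne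
  obtain ⟨y, hy, hynot⟩ : ∃ y ∈ Δ, y ∉ suppF f Δ := by
    by_contra hcon
    push_neg at hcon
    exact hneq (subset_antisymm (suppF_subset f Δ) hcon)
  have hylt : f y < f x := by
    by_contra hge
    push_neg at hge
    exact hynot ⟨hy, fun z hz => le_trans (hx.2 z hz) hge⟩
  have hker : vectorSpan ℝ (suppF f Δ) ≤ LinearMap.ker (f : V n →ₗ[ℝ] ℝ) := by
    rw [vectorSpan_def, Submodule.span_le]
    rintro v hv
    obtain ⟨a, ha, b, hb, rfl⟩ := Set.mem_vsub.mp hv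
    have hab : f a = f b := le_antisymm (hb.2 a ha.1) (ha.2 b hb.1)
    simp [LinearMap.mem_ker, vsub_eq_sub, map_sub, hab]
  have hmem : y -ᵥ x ∈ vectorSpan ℝ Δ := vsub_mem_vectorSpan ℝ hy hx.1
  have hnot : y -ᵥ x ∉ vectorSpan ℝ (suppF f Δ) := by
    intro hmem'
    have h2 := hker hmem'
    rw [LinearMap.mem_ker] at h2
    simp only [vsub_eq_sub, map_sub, ContinuousLinearMap.coe_coe] at h2
    have h3 : f y = f x := by linarith [sub_eq_zero.mp h2]
    exact absurd h3 (ne_of_lt hylt)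
  have hlt : vectorSpan ℝ (suppF f Δ) < vectorSpan ℝ Δ :=
    lt_of_le_of_ne (vectorSpan_mono ℝ (suppF_subset f Δ))
      (fun hEq => hnot (hEq ▸ hmem))
  exact Submodule.finrank_lt_finrank_of_lt hlt

end Aux

/-- Lemma 2.14: an essential facing of `A` (the maximal essential subtuple `BI` of a
face `B ≺ A`) has `dim` equal to `min dim A` if it is trivial (a subtuple of `A`
itself), and `dim` strictly less than `min dim A` otherwise. -/
theorem stmt15 {n : ℕ} {K : Type} [Fintype K] [DecidableEq K]
    (A : K → Set (V n)) (hA : ∀ k, IsPolytope (A k))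
    (B : K → Set (V n)) (hB : TupleFace B A)
    (I : Finset K) (hmax : MaxEssentialSub B I)
    (m : ℤ) (hm : IsLeast (Set.range (tdim A)) m) :
    ((∀ i ∈ I, B i = A i) → tdim B I = m) ∧
    ((¬ ∀ i ∈ I, B i = A i) → tdim B I < m) := by
  classical
  -- basic properties of the polytopes A k
  have hAc : ∀ k, IsCompact (A k) := by
    intro k
    obtain ⟨F, _, hF⟩ := hA k
    rw [hF]
    exact F.finite_toSet.isCompact_convexHull ℝ
  have hAcv : ∀ k, Convex ℝ (A k) := by
    intro k
    obtain ⟨F, _, hF⟩ := hA k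
    rw [hF]
    exact convex_convexHull ℝ _
  have hAne : ∀ k, (A k).Nonempty := by
    intro k
    obtain ⟨F, ⟨v, hv⟩, hF⟩ := hA k
    exact ⟨v, hF ▸ subset_convexHull ℝ _ hv⟩
  -- basic properties of the faces B k
  have hBface : ∀ k, ∃ f : V n →L[ℝ] ℝ, B k = suppF f (A k) := by
    intro k
    obtain ⟨g, hg⟩ := hB.1 k
    exact ⟨innerSL ℝ g, by rw [hg, suppFaceV_eq_suppF]⟩
  have hBsub : ∀ k, B k ⊆ A k := by
    intro k
    obtain ⟨f, hf⟩ := hBface k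
    rw [hf]; exact suppF_subset f (A k)
  have hBne : ∀ k, (B k).Nonempty := by
    intro k
    obtain ⟨f, hf⟩ := hBface k
    rw [hf]; exact suppF_nonempty (hAc k) (hAne k) f
  have hBcv : ∀ k, Convex ℝ (B k) := by
    intro k
    obtain ⟨f, hf⟩ := hBface k
    rw [hf]; exact suppF_convex (hAcv k) f
  have hBcl : ∀ k, IsClosed (B k) := by
    intro k
    obtain ⟨f, hf⟩ := hBface k
    rw [hf]; exact suppF_isClosed (hAc k).isClosed f
  -- tdim B I ≤ m
  obtain ⟨J0, hJ0⟩ := hm.1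
  have hBI_le_m : tdim B I ≤ m := by
    calc tdim B I ≤ tdim B J0 := hmax.1.1.2 ⟨J0, rfl⟩
    _ ≤ tdim A J0 := tdim_mono hBsub J0
    _ = m := hJ0
  constructor
  · -- trivial case
    intro h
    have e : (∑ i ∈ I, B i) = ∑ i ∈ I, A i := Finset.sum_congr rfl h
    have e2 : tdim B I = tdim A I := by unfold tdim; rw [e]
    exact le_antisymm hBI_le_m (by rw [e2]; exact hm.2 ⟨I, rfl⟩)
  · -- nontrivial case
    intro hne
    push_neg at hne
    obtain ⟨i₀, hi₀I, hi₀⟩ := hne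
    by_contra hlt
    push_neg at hlt
    have heq : tdim B I = m := le_antisymm hBI_le_m hlt
    -- the common covector g of the total face
    obtain ⟨g, hg0⟩ := hB.2
    set φ := innerSL ℝ g with hφ
    have hg : (∑ i, B i) = suppF φ (∑ i, A i) := by
      rw [hg0, suppFaceV_eq_suppF]
    set C : K → Set (V n) := fun i => suppF φ (A i) with hC
    have hgC : (∑ i, B i) = ∑ i, C i := by
      rw [hg, suppF_sum]
    -- B i ⊆ C i
    have hBsubC : ∀ i, B i ⊆ C i := by
      intro i b hb
      set x : K → V n := Function.update (fun j => (hBne j).some) i b with hx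
      have hxB : ∀ j, x j ∈ B j := by
        intro j
        rcases eq_or_ne j i with rfl | hj
        · simpa [hx] using hb
        · simpa [hx, Function.update_of_ne hj] using (hBne j).some_mem
      have hxmem : (∑ j, x j) ∈ suppF φ (∑ j, A j) := by
        rw [← hg]
        exact Set.finset_sum_mem_finset_sum _ _ _ fun j _ => hxB j
      have h := mem_suppF_of_sum_mem φ (fun j _ => hBsub j (hxB j)) hxmem i
        (Finset.mem_univ i)
      simpa [hx] using h
    -- C properties
    have hCcompact : ∀ j, IsCompact (C j) := fun j => suppF_compact (hAc j) φ
    have hCne : ∀ j, (C j).Nonempty := fun j => suppF_nonempty (hAc j) (hAne j) φ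
    have hCcv : ∀ j, Convex ℝ (C j) := fun j => suppF_convex (hAcv j) φ
    have hCcl : ∀ j, IsClosed (C j) := fun j => suppF_isClosed (hAc j).isClosed φ
    -- B i = C i
    have hBC : ∀ i, B i = C i := fun i =>
      eq_of_sum_eq_sum (fun j _ => hBsubC j) (fun j _ => hBcv j)
        (fun j _ => hBcl j) (fun j _ => hCcompact j) (fun j _ => hCne j) hgC i
        (Finset.mem_univ i)
    have hCi₀ : C i₀ ≠ A i₀ := fun h => hi₀ ((hBC i₀).trans h)
    -- tdim B J0 = m
    have hBJ0 : tdim B J0 = m :=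
      le_antisymm (hJ0 ▸ tdim_mono hBsub J0) (heq ▸ hmax.1.1.2 ⟨J0, rfl⟩)
    -- I ⊆ J0 by submodularity + essentiality
    have hIJ0 : I ⊆ J0 := by
      have hsubm := tdim_submodular hBne I J0
      have hunion : m ≤ tdim B (I ∪ J0) := heq ▸ hmax.1.1.2 ⟨I ∪ J0, rfl⟩
      have hinter_le : tdim B (I ∩ J0) ≤ m := by
        rw [heq, hBJ0] at hsubm
        omega
      by_contra hnsub
      have hss : I ∩ J0 ⊂ I := by
        refine ⟨Finset.inter_subset_left, fun hsub => hnsub fun a ha => ?_⟩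
        exact Finset.mem_of_mem_inter_right (hsub ha)
      have h2 := hmax.1.2 (I ∩ J0) hss
      rw [heq] at h2
      omega
    have hi₀J0 : i₀ ∈ J0 := hIJ0 hi₀I
    -- the sum of C over J0 is a proper support face of the sum of A over J0
    have hCsum : suppF φ (∑ j ∈ J0, A j) = ∑ j ∈ J0, C j := suppF_sum J0 A φ
    have hproper : suppF φ (∑ j ∈ J0, A j) ≠ ∑ j ∈ J0, A j := by
      intro hEq
      rw [hCsum] at hEq
      exact hCi₀ (eq_of_sum_eq_sum (fun j _ => suppF_subset φ (A j))
        (fun j _ => hCcv j) (fun j _ => hCcl j) (fun j _ => hAc j)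
        (fun j _ => hAne j) hEq i₀ hi₀J0)
    have hfne : (suppF φ (∑ j ∈ J0, A j)).Nonempty := by
      rw [hCsum]
      exact sum_sets_nonempty fun j _ => hCne j
    have hdimlt : affDim (suppF φ (∑ j ∈ J0, A j)) < affDim (∑ j ∈ J0, A j) :=
      affDim_suppF_lt hfne hproper
    -- conclude: tdim B J0 < m
    have hBsumC : (∑ j ∈ J0, B j) = ∑ j ∈ J0, C j :=
      Finset.sum_congr rfl fun j _ => hBC j
    have hfin : tdim B J0 < tdim A J0 := by
      unfold tdim
      rw [hBsumC, ← hCsum]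
      omega
    omega

end
end
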